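/- For a Hilbert space X, the n-th polarization constant localizes to subspaces of dimension at most n: c_n(X) = sup { c_n(Y) : Y a closed subspace of X with dim Y ≤ n }. -/

import Mathlib

open scoped BigOperators

/-- `sup_{‖x‖≤1} |∏ⱼ fⱼ(x)|` for functionals `f₁,…,fₙ`. -/
noncomputable def supNormProd {𝕜 X : Type*} [RCLike 𝕜] [NormedAddCommGroup X]
    [NormedSpace 𝕜 X] {n : ℕ} (f : Fin n → (X →L[𝕜] 𝕜)) : ℝ :=
  sSup {t : ℝ | ∃ x : X, ‖x‖ ≤ 1 ∧ t = ‖∏ j, f j x‖}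

/-- The n-th linear polarization constant
`cₙ(X) = 1 / inf_{f₁,…,fₙ ∈ S_{X*}} sup_{‖x‖≤1} |∏ⱼ fⱼ(x)|`. -/
noncomputable def polarizationConst (𝕜 X : Type*) [RCLike 𝕜] [NormedAddCommGroup X]
    [NormedSpace 𝕜 X] (n : ℕ) : ℝ :=
  (sInf {y : ℝ | ∃ f : Fin n → (X →L[𝕜] 𝕜), (∀ j, ‖f j‖ = 1) ∧ y = supNormProd f})⁻¹

section Helpers

variable {𝕜 X : Type*} [RCLike 𝕜] [NormedAddCommGroup X] [NormedSpace 𝕜 X] {n : ℕ}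

lemma snpSet_nonempty (f : Fin n → (X →L[𝕜] 𝕜)) :
    {t : ℝ | ∃ x : X, ‖x‖ ≤ 1 ∧ t = ‖∏ j, f j x‖}.Nonempty :=
  ⟨‖∏ j, f j (0 : X)‖, 0, by simp, rfl⟩

lemma snpSet_bddAbove (f : Fin n → (X →L[𝕜] 𝕜)) :
    BddAbove {t : ℝ | ∃ x : X, ‖x‖ ≤ 1 ∧ t = ‖∏ j, f j x‖} := by
  refine ⟨∏ j, ‖f j‖, ?_⟩
  rintro t ⟨x, hx, rfl⟩
  calc ‖∏ j, f j x‖ = ∏ j, ‖f j x‖ := norm_prod _ _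
    _ ≤ ∏ j, ‖f j‖ := by
        refine Finset.prod_le_prod (fun j _ => norm_nonneg _) (fun j _ => ?_)
        calc ‖f j x‖ ≤ ‖f j‖ * ‖x‖ := (f j).le_opNorm x
          _ ≤ ‖f j‖ * 1 := by
              exact mul_le_mul_of_nonneg_left hx (norm_nonneg _)
          _ = ‖f j‖ := mul_one _

lemma le_supNormProd (f : Fin n → (X →L[𝕜] 𝕜)) {x : X} (hx : ‖x‖ ≤ 1) :
    ‖∏ j, f j x‖ ≤ supNormProd f :=
  le_csSup (snpSet_bddAbove f) ⟨x, hx, rfl⟩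

lemma supNormProd_le (f : Fin n → (X →L[𝕜] 𝕜)) {C : ℝ}
    (h : ∀ x : X, ‖x‖ ≤ 1 → ‖∏ j, f j x‖ ≤ C) : supNormProd f ≤ C := by
  refine csSup_le (snpSet_nonempty f) ?_
  rintro t ⟨x, hx, rfl⟩
  exact h x hx

lemma supNormProd_nonneg (f : Fin n → (X →L[𝕜] 𝕜)) : 0 ≤ supNormProd f :=
  le_trans (norm_nonneg _) (le_supNormProd f (by simp : ‖(0 : X)‖ ≤ 1))

end Helpers

section Prod

variable {𝕜 : Type*} [RCLike 𝕜]

lemma norm_prod_sub_prod_le : ∀ {m : ℕ} (a b : Fin m → 𝕜), (∀ i, ‖a i‖ ≤ 1) →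
    (∀ i, ‖b i‖ ≤ 1) → ‖∏ i, a i - ∏ i, b i‖ ≤ ∑ i, ‖a i - b i‖ := by
  intro m
  induction m with
  | zero => intro a b _ _; simp
  | succ m ih =>
    intro a b ha hb
    have key : ∏ i, a i - ∏ i, b i
        = a 0 * (∏ i : Fin m, a i.succ - ∏ i : Fin m, b i.succ)
          + (a 0 - b 0) * ∏ i : Fin m, b i.succ := by
      rw [Fin.prod_univ_succ a, Fin.prod_univ_succ b]; ring
    rw [key, Fin.sum_univ_succ]
    refine le_trans (norm_add_le _ _) ?_
    have h1 : ‖a 0 * (∏ i : Fin m, a i.succ - ∏ i : Fin m, b i.succ)‖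
        ≤ ∑ i : Fin m, ‖a i.succ - b i.succ‖ := by
      rw [norm_mul]
      calc ‖a 0‖ * ‖∏ i : Fin m, a i.succ - ∏ i : Fin m, b i.succ‖
          ≤ 1 * (∑ i : Fin m, ‖a i.succ - b i.succ‖) := by
            refine mul_le_mul (ha 0) (ih _ _ (fun i => ha i.succ) (fun i => hb i.succ))
              (norm_nonneg _) zero_le_one
        _ = _ := one_mul _
    have h2 : ‖(a 0 - b 0) * ∏ i : Fin m, b i.succ‖ ≤ ‖a 0 - b 0‖ := by
      rw [norm_mul]
      calc ‖a 0 - b 0‖ * ‖∏ i : Fin m, b i.succ‖ ≤ ‖a 0 - b 0‖ * 1 := by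
            refine mul_le_mul_of_nonneg_left ?_ (norm_nonneg _)
            rw [norm_prod]
            exact Finset.prod_le_one (fun i _ => norm_nonneg _) (fun i _ => hb i.succ)
        _ = _ := mul_one _
    linarith

end Prod

section UnitSet

variable (𝕜 Z : Type*) [RCLike 𝕜] [NormedAddCommGroup Z] [NormedSpace 𝕜 Z] (n : ℕ)

/-- The set of values `supNormProd f` for unit-norm tuples of functionals. -/
def unitSet : Set ℝ :=
  {y : ℝ | ∃ f : Fin n → (Z →L[𝕜] 𝕜), (∀ j, ‖f j‖ = 1) ∧ y = supNormProd f}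

variable {𝕜 Z n}

lemma supNormProd_sub_le (g h : Fin n → (Z →L[𝕜] 𝕜)) (hg : ∀ j, ‖g j‖ ≤ 1)
    (hh : ∀ j, ‖h j‖ ≤ 1) :
    supNormProd g ≤ supNormProd h + ∑ j, ‖g j - h j‖ := by
  refine supNormProd_le g (fun x hx => ?_)
  have hb : ∀ (u : Fin n → (Z →L[𝕜] 𝕜)), (∀ j, ‖u j‖ ≤ 1) → ∀ i, ‖u i x‖ ≤ 1 := by
    intro u hu i
    calc ‖u i x‖ ≤ ‖u i‖ * ‖x‖ := (u i).le_opNorm x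
      _ ≤ 1 * 1 := mul_le_mul (hu i) hx (norm_nonneg _) zero_le_one
      _ = 1 := mul_one _
  have key : ‖∏ j, g j x - ∏ j, h j x‖ ≤ ∑ j, ‖g j - h j‖ := by
    refine le_trans (norm_prod_sub_prod_le (fun j => g j x) (fun j => h j x)
      (hb g hg) (hb h hh)) ?_
    refine Finset.sum_le_sum (fun j _ => ?_)
    calc ‖g j x - h j x‖ = ‖(g j - h j) x‖ := by simp
      _ ≤ ‖g j - h j‖ * ‖x‖ := (g j - h j).le_opNorm x
      _ ≤ ‖g j - h j‖ * 1 := mul_le_mul_of_nonneg_left hx (norm_nonneg _)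
      _ = ‖g j - h j‖ := mul_one _
  have h2 : ‖∏ j, h j x‖ ≤ supNormProd h := le_supNormProd h hx
  have h3 : ‖∏ j, g j x‖ - ‖∏ j, h j x‖ ≤ ‖∏ j, g j x - ∏ j, h j x‖ :=
    norm_sub_norm_le _ _
  linarith

lemma supNormProd_pos [CompleteSpace Z] (f : Fin n → (Z →L[𝕜] 𝕜))
    (hf : ∀ j, ‖f j‖ = 1) : 0 < supNormProd f := by
  obtain ⟨x, hx⟩ : ∃ x : Z, ∏ j, f j x ≠ 0 := by
    by_contra h
    push_neg at h
    have hcover : (⋃ j, ((LinearMap.ker (f j : Z →ₗ[𝕜] 𝕜) : Submodule 𝕜 Z) : Set Z)) = Set.univ := by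
      refine Set.eq_univ_of_forall (fun x => ?_)
      obtain ⟨j, -, hj⟩ := Finset.prod_eq_zero_iff.mp (h x)
      exact Set.mem_iUnion.mpr ⟨j, hj⟩
    obtain ⟨j, hj⟩ := nonempty_interior_of_iUnion_of_closed
      (fun j => (ContinuousLinearMap.isClosed_ker (f j))) hcover
    have : LinearMap.ker (f j : Z →ₗ[𝕜] 𝕜) = ⊤ := Submodule.eq_top_of_nonempty_interior' _ hj
    have hz : f j = 0 := by
      ext z
      have : z ∈ LinearMap.ker (f j : Z →ₗ[𝕜] 𝕜) := this ▸ Submodule.mem_top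
      simpa using this
    have := hf j
    rw [hz] at this
    simp at this
  set r : ℝ := max 1 ‖x‖ with hr
  have hr1 : (1 : ℝ) ≤ r := le_max_left _ _
  have hrpos : 0 < r := lt_of_lt_of_le zero_lt_one hr1
  set y : Z := ((r : 𝕜))⁻¹ • x with hy
  have hny : ‖y‖ ≤ 1 := by
    rw [hy, norm_smul, norm_inv]
    have : ‖((r : ℝ) : 𝕜)‖ = r := by
      rw [RCLike.norm_ofReal, abs_of_pos hrpos]
    rw [this]
    rw [inv_mul_le_iff₀ hrpos, mul_one]
    exact le_max_right _ _
  have hprod : ∏ j, f j y ≠ 0 := by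
    have : ∀ j, f j y = ((r : 𝕜))⁻¹ * f j x := by
      intro j; rw [hy, map_smul, smul_eq_mul]
    rw [Finset.prod_congr rfl (fun j _ => this j), Finset.prod_mul_distrib,
      Finset.prod_const]
    refine mul_ne_zero (pow_ne_zero _ (inv_ne_zero ?_)) hx
    simpa using ne_of_gt hrpos
  calc (0 : ℝ) < ‖∏ j, f j y‖ := norm_pos_iff.mpr hprod
    _ ≤ supNormProd f := le_supNormProd f hny

end UnitSet

section Compactness

variable {𝕜 Z : Type*} [RCLike 𝕜] [NormedAddCommGroup Z] [NormedSpace 𝕜 Z] {n : ℕ}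

lemma sInf_unitSet_pos [FiniteDimensional 𝕜 Z] (hne : (unitSet 𝕜 Z n).Nonempty) :
    0 < sInf (unitSet 𝕜 Z n) := by
  haveI : CompleteSpace Z := FiniteDimensional.complete 𝕜 Z
  haveI : ProperSpace (Fin n → (Z →L[𝕜] 𝕜)) := FiniteDimensional.proper 𝕜 _
  set K : Set (Fin n → (Z →L[𝕜] 𝕜)) := {g | ∀ j, ‖g j‖ = 1} with hK
  have himg : unitSet 𝕜 Z n = (fun g => supNormProd g) '' K := by
    ext y
    constructor
    · rintro ⟨f, hf, rfl⟩; exact ⟨f, hf, rfl⟩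
    · rintro ⟨f, hf, rfl⟩; exact ⟨f, hf, rfl⟩
  have hKne : K.Nonempty := by
    obtain ⟨y, f, hf, -⟩ := hne; exact ⟨f, hf⟩
  have hKclosed : IsClosed K := by
    have : K = ⋂ j, {g : Fin n → (Z →L[𝕜] 𝕜) | ‖g j‖ = 1} := by
      ext g; simp [hK, Set.mem_iInter]
    rw [this]
    exact isClosed_iInter fun j =>
      isClosed_eq ((continuous_apply j).norm) continuous_const
  have hKbd : Bornology.IsBounded K := by
    refine Metric.isBounded_closedBall (x := (0 : Fin n → (Z →L[𝕜] 𝕜))) (r := 1) |>.subset ?_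
    intro g hg
    rw [Metric.mem_closedBall, dist_zero_right]
    refine (pi_norm_le_iff_of_nonneg zero_le_one).mpr (fun j => le_of_eq (hg j))
  have hKcomp : IsCompact K := Metric.isCompact_of_isClosed_isBounded hKclosed hKbd
  have hcont : ContinuousOn (fun g : Fin n → (Z →L[𝕜] 𝕜) => supNormProd g) K := by
    have hlip : LipschitzOnWith (n : NNReal) (fun g : Fin n → (Z →L[𝕜] 𝕜) => supNormProd g)
        {g : Fin n → (Z →L[𝕜] 𝕜) | ∀ j, ‖g j‖ ≤ 1} := by
      rw [lipschitzOnWith_iff_dist_le_mul]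
      intro g hg h hh
      have hsum : ∀ (u v : Fin n → (Z →L[𝕜] 𝕜)), ∑ j, ‖u j - v j‖ ≤ n * dist u v := by
        intro u v
        calc ∑ j, ‖u j - v j‖ ≤ ∑ _j : Fin n, dist u v := by
              refine Finset.sum_le_sum (fun j _ => ?_)
              rw [← dist_eq_norm]
              exact dist_le_pi_dist u v j
          _ = n * dist u v := by simp [Finset.sum_const, mul_comm]
      have h1 := supNormProd_sub_le g h hg hh
      have h2 := supNormProd_sub_le h g hh hg
      have h3 : ∑ j, ‖h j - g j‖ = ∑ j, ‖g j - h j‖ := by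
        refine Finset.sum_congr rfl (fun j _ => norm_sub_rev _ _)
      rw [Real.dist_eq, abs_sub_le_iff]
      constructor
      · calc supNormProd g - supNormProd h ≤ ∑ j, ‖g j - h j‖ := by linarith
          _ ≤ n * dist g h := hsum g h
      · calc supNormProd h - supNormProd g ≤ ∑ j, ‖g j - h j‖ := by
              rw [← h3]; linarith
          _ ≤ n * dist g h := hsum g h
    exact hlip.continuousOn.mono (fun g hg j => le_of_eq (hg j))
  rw [himg]
  have hcomp := hKcomp.image_of_continuousOn hcont
  obtain ⟨g₀, hg₀, heq⟩ := hcomp.sInf_mem (hKne.image _)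
  rw [← heq]
  exact supNormProd_pos g₀ hg₀

end Compactness

section Hilbert

variable {𝕜 X : Type*} [RCLike 𝕜] [NormedAddCommGroup X] [InnerProductSpace 𝕜 X]
  [CompleteSpace X] {n : ℕ}

local notation "⟪" x ", " y "⟫" => @inner 𝕜 _ _ x y

/-- Extension: compose with the orthogonal projection. -/
lemma unitSet_subset (Y : Submodule 𝕜 X) (hY : IsClosed (Y : Set X)) :
    unitSet 𝕜 Y n ⊆ unitSet 𝕜 X n := by
  haveI : CompleteSpace Y := hY.completeSpace_coe
  rintro y ⟨g, hg, rfl⟩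
  set P : X →L[𝕜] Y := Submodule.orthogonalProjectionOnto Y with hP
  have hPx : ∀ x : X, ‖P x‖ ≤ ‖x‖ := by
    intro x
    calc ‖P x‖ ≤ ‖P‖ * ‖x‖ := P.le_opNorm x
      _ ≤ 1 * ‖x‖ := mul_le_mul_of_nonneg_right (Submodule.orthogonalProjectionOnto_norm_le Y) (norm_nonneg _)
      _ = ‖x‖ := one_mul _
  set f : Fin n → (X →L[𝕜] 𝕜) := fun j => (g j).comp P with hfdef
  have hfg : ∀ (z : Y) j, f j (z : X) = g j z := by
    intro z j
    have : P (z : X) = z := Submodule.orthogonalProjectionOnto_mem_subspace_eq_self z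
    simp only [hfdef, ContinuousLinearMap.comp_apply, this]
  have hf : ∀ j, ‖f j‖ = 1 := by
    intro j
    apply le_antisymm
    · refine (f j).opNorm_le_bound zero_le_one fun x => ?_
      calc ‖g j (P x)‖ ≤ ‖g j‖ * ‖P x‖ := (g j).le_opNorm _
        _ ≤ 1 * ‖x‖ := by
            rw [hg j]
            exact mul_le_mul_of_nonneg_left (hPx x) zero_le_one
        _ = 1 * ‖x‖ := rfl
    · rw [← hg j]
      refine (g j).opNorm_le_bound (norm_nonneg (f j)) fun z => ?_
      calc ‖g j z‖ = ‖f j (z : X)‖ := by rw [hfg z j]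
        _ ≤ ‖f j‖ * ‖(z : X)‖ := (f j).le_opNorm _
        _ = ‖f j‖ * ‖z‖ := rfl
  refine ⟨f, hf, ?_⟩
  unfold supNormProd
  congr 1
  ext t
  constructor
  · rintro ⟨z, hz, rfl⟩
    refine ⟨(z : X), by rw [Submodule.norm_coe]; exact hz, ?_⟩
    congr 1
    exact Finset.prod_congr rfl fun j _ => (hfg z j).symm
  · rintro ⟨x, hx, rfl⟩
    refine ⟨P x, le_trans (hPx x) hx, ?_⟩
    rfl

/-- Localization to the span of the Riesz representatives. -/
lemma exists_localize (f : Fin n → (X →L[𝕜] 𝕜)) (hf : ∀ j, ‖f j‖ = 1) :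
    ∃ Y : Submodule 𝕜 X, IsClosed (Y : Set X) ∧ Module.finrank 𝕜 Y ≤ n ∧
      FiniteDimensional 𝕜 Y ∧ supNormProd f ∈ unitSet 𝕜 Y n := by
  classical
  set v : Fin n → X := fun j => (InnerProductSpace.toDual 𝕜 X).symm (f j) with hvdef
  set Y := Submodule.span 𝕜 (Set.range v) with hYdef
  haveI hfd : FiniteDimensional 𝕜 Y :=
    FiniteDimensional.span_of_finite 𝕜 (Set.finite_range v)
  have hclosed : IsClosed (Y : Set X) := Submodule.closed_of_finiteDimensional Y
  have hrank : Module.finrank 𝕜 Y ≤ n := by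
    refine le_trans (finrank_span_le_card (R := 𝕜) (Set.range v)) ?_
    rw [Set.toFinset_card]
    exact le_trans (Fintype.card_range_le v) (le_of_eq (Fintype.card_fin n))
  have hv : ∀ j, v j ∈ Y := fun j => Submodule.subset_span (Set.mem_range_self j)
  have hvn : ∀ j, ‖v j‖ = 1 := fun j => by
    rw [hvdef]; rw [LinearIsometryEquiv.norm_map]; exact hf j
  have happ : ∀ j (x : X), f j x = ⟪v j, x⟫ := fun j x =>
    (InnerProductSpace.toDual_symm_apply).symm
  set g : Fin n → ((Y : Submodule 𝕜 X) →L[𝕜] 𝕜) := fun j => (f j).comp (Submodule.subtypeL Y)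
    with hgdef
  have hgapp : ∀ (z : Y) j, g j z = f j (z : X) := fun z j => rfl
  have hgnorm : ∀ j, ‖g j‖ = 1 := by
    intro j
    apply le_antisymm
    · refine (g j).opNorm_le_bound zero_le_one fun z => ?_
      calc ‖f j (z : X)‖ ≤ ‖f j‖ * ‖(z : X)‖ := (f j).le_opNorm _
        _ = 1 * ‖z‖ := by rw [hf j]; rfl
    · have h1 : g j ⟨v j, hv j⟩ = ((1 : ℝ) : 𝕜) := by
        rw [hgapp, happ]
        rw [inner_self_eq_norm_sq_to_K]
        rw [hvn j]
        norm_num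
      have h2 : ‖(⟨v j, hv j⟩ : Y)‖ = 1 := by
        rw [← Submodule.norm_coe]; exact hvn j
      have := (g j).le_opNorm ⟨v j, hv j⟩
      rw [h1, h2, mul_one] at this
      simpa using this
  haveI : CompleteSpace Y := hclosed.completeSpace_coe
  have key : ∀ (x : X) j, f j x = g j (Submodule.orthogonalProjectionOnto Y x) := by
    intro x j
    have horth : x - (Y.orthogonalProjectionOnto x : X) ∈ Yᗮ := Y.sub_starProjection_mem_orthogonal x
    have hz : ⟪v j, x - (Submodule.orthogonalProjectionOnto Y x : X)⟫ = 0 :=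
      (Submodule.mem_orthogonal Y _).mp horth (v j) (hv j)
    have : f j x - f j ((Submodule.orthogonalProjectionOnto Y x : X)) = 0 := by
      rw [happ, happ, ← inner_sub_right]; exact hz
    have := sub_eq_zero.mp this
    rw [this, hgapp]
  refine ⟨Y, hclosed, hrank, hfd, g, hgnorm, ?_⟩
  unfold supNormProd
  congr 1
  ext t
  constructor
  · rintro ⟨x, hx, rfl⟩
    refine ⟨Submodule.orthogonalProjectionOnto Y x, ?_, ?_⟩
    · calc ‖Submodule.orthogonalProjectionOnto Y x‖ ≤ ‖Submodule.orthogonalProjectionOnto Y‖ * ‖x‖ :=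
          (Submodule.orthogonalProjectionOnto Y).le_opNorm x
        _ ≤ 1 * 1 := mul_le_mul (Submodule.orthogonalProjectionOnto_norm_le Y) hx (norm_nonneg _) zero_le_one
        _ = 1 := mul_one _
    · congr 1
      exact Finset.prod_congr rfl fun j _ => key x j
  · rintro ⟨z, hz, rfl⟩
    exact ⟨(z : X), by rw [Submodule.norm_coe]; exact hz, rfl⟩

end Hilbert

lemma polarizationConst_eq (𝕜 Z : Type*) [RCLike 𝕜] [NormedAddCommGroup Z]
    [NormedSpace 𝕜 Z] (n : ℕ) :
    polarizationConst 𝕜 Z n = (sInf (unitSet 𝕜 Z n))⁻¹ := rfl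

lemma unitSet_mem_nonneg {𝕜 Z : Type*} [RCLike 𝕜] [NormedAddCommGroup Z]
    [NormedSpace 𝕜 Z] {n : ℕ} : ∀ s ∈ unitSet 𝕜 Z n, (0:ℝ) ≤ s := by
  rintro s ⟨f, hf, rfl⟩; exact supNormProd_nonneg f

/-- For a Hilbert space `X`, `cₙ(X) = sup { cₙ(Y) : Y ≤ X closed, dim Y ≤ n }`. -/
theorem polarizationConst_eq_sup_finiteDim {𝕜 X : Type*} [RCLike 𝕜] [NormedAddCommGroup X]
    [InnerProductSpace 𝕜 X] [CompleteSpace X] [Nontrivial X] (n : ℕ) :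
    polarizationConst 𝕜 X n =
      sSup {c : ℝ | ∃ Y : Submodule 𝕜 X, IsClosed (Y : Set X) ∧
        Module.finrank 𝕜 Y ≤ n ∧ c = polarizationConst 𝕜 Y n} := by
  classical
  set T : Set ℝ := {c : ℝ | ∃ Y : Submodule 𝕜 X, IsClosed (Y : Set X) ∧
      Module.finrank 𝕜 Y ≤ n ∧ c = polarizationConst 𝕜 Y n} with hT
  rw [polarizationConst_eq]
  set A := sInf (unitSet 𝕜 X n) with hA
  obtain ⟨x0, hx0⟩ := exists_ne (0 : X)
  obtain ⟨φ, hφn, -⟩ := exists_dual_vector 𝕜 x0 (norm_ne_zero_iff.mpr hx0)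
  have hSne : (unitSet 𝕜 X n).Nonempty :=
    ⟨supNormProd (fun _ : Fin n => φ), ⟨fun _ => φ, fun _ => hφn, rfl⟩⟩
  have hSbdd : BddBelow (unitSet 𝕜 X n) := ⟨0, unitSet_mem_nonneg⟩
  have hA0 : 0 ≤ A := le_csInf hSne unitSet_mem_nonneg
  have key2 : ∀ s ∈ unitSet 𝕜 X n, ∃ Y : Submodule 𝕜 X, IsClosed (Y : Set X) ∧
      Module.finrank 𝕜 Y ≤ n ∧ 0 < sInf (unitSet 𝕜 Y n) ∧ sInf (unitSet 𝕜 Y n) ≤ s := by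
    rintro s ⟨f, hf, rfl⟩
    obtain ⟨Y, hc, hr, hfd, hmem⟩ := exists_localize f hf
    exact ⟨Y, hc, hr, sInf_unitSet_pos ⟨_, hmem⟩,
      csInf_le ⟨0, unitSet_mem_nonneg⟩ hmem⟩
  rcases eq_or_lt_of_le hA0 with hAz | hApos
  · rw [← hAz, inv_zero]
    have hnb : ¬ BddAbove T := by
      rintro ⟨M, hM⟩
      obtain ⟨s0, hs0⟩ := id hSne
      obtain ⟨Y0, hc0, hr0, hp0, -⟩ := key2 s0 hs0
      have hY0T : polarizationConst 𝕜 Y0 n ∈ T := ⟨Y0, hc0, hr0, rfl⟩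
      have hMpos : 0 < M := by
        refine lt_of_lt_of_le ?_ (hM hY0T)
        rw [polarizationConst_eq]
        exact inv_pos.mpr hp0
      obtain ⟨s, hsS, hslt⟩ := Real.lt_sInf_add_pos hSne (inv_pos.mpr hMpos)
      rw [← hA, ← hAz, zero_add] at hslt
      obtain ⟨Y, hc, hr, hp, hle⟩ := key2 s hsS
      have hTmem : polarizationConst 𝕜 Y n ∈ T := ⟨Y, hc, hr, rfl⟩
      have hlt : sInf (unitSet 𝕜 Y n) < M⁻¹ := lt_of_le_of_lt hle hslt
      have hMlt : M < polarizationConst 𝕜 Y n := by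
        rw [polarizationConst_eq]
        have := (inv_lt_inv₀ (inv_pos.mpr hMpos) hp).mpr hlt
        rwa [inv_inv] at this
      exact absurd (hM hTmem) (not_le.mpr hMlt)
    rw [Real.sSup_of_not_bddAbove hnb]
  · have hupper : ∀ c ∈ T, c ≤ A⁻¹ := by
      rintro c ⟨Y, hc, hr, rfl⟩
      rw [polarizationConst_eq]
      rcases Set.eq_empty_or_nonempty (unitSet 𝕜 Y n) with he | hne
      · rw [he, Real.sInf_empty, inv_zero]
        exact inv_nonneg.mpr hA0
      · have hAle : A ≤ sInf (unitSet 𝕜 Y n) :=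
          le_csInf hne (fun b hb => csInf_le hSbdd (unitSet_subset Y hc hb))
        exact inv_anti₀ hApos hAle
    have hTbdd : BddAbove T := ⟨A⁻¹, hupper⟩
    apply le_antisymm
    · refine le_of_forall_pos_le_add ?_
      intro δ hδ
      have hεpos : 0 < δ * A * A := by positivity
      obtain ⟨s, hsS, hslt⟩ := Real.lt_sInf_add_pos hSne hεpos
      rw [← hA] at hslt
      obtain ⟨Y, hc, hr, hp, hle⟩ := key2 s hsS
      have hTmem : polarizationConst 𝕜 Y n ∈ T := ⟨Y, hc, hr, rfl⟩
      have h1 : sInf (unitSet 𝕜 Y n) < A + δ * A * A := lt_of_le_of_lt hle hslt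
      have h2 : (A + δ * A * A)⁻¹ ≤ (sInf (unitSet 𝕜 Y n))⁻¹ :=
        inv_anti₀ hp h1.le
      have h3 : polarizationConst 𝕜 Y n ≤ sSup T := le_csSup hTbdd hTmem
      rw [polarizationConst_eq] at h3
      have hApε : 0 < A + δ * A * A := by nlinarith
      have hdiff : A⁻¹ - (A + δ * A * A)⁻¹ = (δ * A * A) / (A * (A + δ * A * A)) := by
        field_simp
        ring
      have hbound : (δ * A * A) / (A * (A + δ * A * A)) ≤ δ := by
        rw [div_le_iff₀ (by positivity)]
        nlinarith
      linarith
    · exact Real.sSup_le hupper (inv_nonneg.mpr hApos.le)
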